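/- Let D₁, D₂ : [0,∞) → (0,1] be twice continuously differentiable discount functions with D_i' < 0. Define I_i(t) = -D_i''(t)/D_i'(t) + D_i'(t)/D_i(t). Then ln D₁ ∘ (ln D₂)⁻¹ is convex on (-∞,0] if and only if I₁(t) ≥ I₂(t) for all t ≥ 0. -/

import Mathlib

open Real Set Filter Topology

/-- If `f₁, f₂` have derivatives `d₁, d₂` at `t` with `d₂ ≠ 0`, then the Cauchy difference
quotient `(f₁ s - f₁ t)/(f₂ s - f₂ t)` tends to `d₁ / d₂` along any filter `≤ 𝓝[≠] t`. -/
lemma ratio_tendsto_aux {f₁ f₂ : ℝ → ℝ} {d₁ d₂ t : ℝ} (h₁ : HasDerivAt f₁ d₁ t)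
    (h₂ : HasDerivAt f₂ d₂ t) (hd₂ : d₂ ≠ 0) {l : Filter ℝ} (hl : l ≤ 𝓝[≠] t) :
    Filter.Tendsto (fun s => (f₁ s - f₁ t) / (f₂ s - f₂ t)) l (𝓝 (d₁ / d₂)) := by
  have h1 := (hasDerivAt_iff_tendsto_slope.mp h₁).mono_left hl
  have h2 := (hasDerivAt_iff_tendsto_slope.mp h₂).mono_left hl
  refine (h1.div h2 hd₂).congr' ?_
  have hev : ∀ᶠ s in l, s ∈ ({t}ᶜ : Set ℝ) :=
    Filter.eventually_iff_exists_mem.mpr ⟨{t}ᶜ, hl self_mem_nhdsWithin, fun s hs => hs⟩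
  filter_upwards [hev] with s hs
  have hst : s - t ≠ 0 := sub_ne_zero.mpr hs
  show slope f₁ t s / slope f₂ t s = _
  rw [slope_def_field, slope_def_field, div_div_div_comm, div_self hst, div_one]

/-- Cauchy mean value theorem in ratio form. -/
lemma cauchy_ratio_aux {f₁ f₁' f₂ f₂' : ℝ → ℝ} {a b : ℝ} (hab : a < b)
    (h₁ : ∀ x ∈ Icc a b, HasDerivAt f₁ (f₁' x) x)
    (h₂ : ∀ x ∈ Icc a b, HasDerivAt f₂ (f₂' x) x)
    (hne : f₂ b - f₂ a ≠ 0) (h₂' : ∀ x ∈ Ioo a b, f₂' x ≠ 0) :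
    ∃ c ∈ Ioo a b, (f₁ b - f₁ a) / (f₂ b - f₂ a) = f₁' c / f₂' c := by
  obtain ⟨c, hc, hcc⟩ := exists_ratio_hasDerivAt_eq_ratio_slope f₁ f₁' hab
    (fun x hx => (h₁ x hx).continuousAt.continuousWithinAt)
    (fun x hx => h₁ x (Ioo_subset_Icc_self hx))
    f₂ f₂' (fun x hx => (h₂ x hx).continuousAt.continuousWithinAt)
    (fun x hx => h₂ x (Ioo_subset_Icc_self hx))
  refine ⟨c, hc, ?_⟩
  rw [div_eq_div_iff hne (h₂' c hc)]
  linear_combination -hcc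

/-- Comparative DI via the index of DI: `ln D₁ ∘ (ln D₂)⁻¹` is convex on `(-∞,0]` iff
`I₁(t) ≥ I₂(t)` for all `t ≥ 0`, where `Iᵢ = -Dᵢ''/Dᵢ' + Dᵢ'/Dᵢ`. -/
theorem more_DI_iff_index_ge
    (D₁ D₁' D₁'' D₂ D₂' D₂'' : ℝ → ℝ)
    (hD₁ : ∀ t, HasDerivAt D₁ (D₁' t) t) (hD₁' : ∀ t, HasDerivAt D₁' (D₁'' t) t)
    (hD₁''cont : Continuous D₁'')
    (hD₂ : ∀ t, HasDerivAt D₂ (D₂' t) t) (hD₂' : ∀ t, HasDerivAt D₂' (D₂'' t) t)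
    (hD₂''cont : Continuous D₂'')
    (hpos₁ : ∀ t ∈ Ici (0:ℝ), 0 < D₁ t) (hle₁ : ∀ t ∈ Ici (0:ℝ), D₁ t ≤ 1)
    (hneg₁ : ∀ t ∈ Ici (0:ℝ), D₁' t < 0) (hD₁0 : D₁ 0 = 1)
    (hlim₁ : Filter.Tendsto D₁ Filter.atTop (nhds 0))
    (hpos₂ : ∀ t ∈ Ici (0:ℝ), 0 < D₂ t) (hle₂ : ∀ t ∈ Ici (0:ℝ), D₂ t ≤ 1)
    (hneg₂ : ∀ t ∈ Ici (0:ℝ), D₂' t < 0) (hD₂0 : D₂ 0 = 1)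
    (hlim₂ : Filter.Tendsto D₂ Filter.atTop (nhds 0))
    (g₂ : ℝ → ℝ)  -- the inverse of ln D₂ : [0,∞) → (-∞,0]
    (hg₂maps : MapsTo g₂ (Iic 0) (Ici 0))
    (hg₂left : ∀ t ∈ Ici (0:ℝ), g₂ (Real.log (D₂ t)) = t)
    (hg₂right : ∀ z ∈ Iic (0:ℝ), Real.log (D₂ (g₂ z)) = z) :
    ConvexOn ℝ (Iic 0) (fun z => Real.log (D₁ (g₂ z))) ↔
      ∀ t ∈ Ici (0:ℝ),
        -(D₂'' t) / D₂' t + D₂' t / D₂ t ≤ -(D₁'' t) / D₁' t + D₁' t / D₁ t := by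
  have h1ne : ∀ t ∈ Ici (0:ℝ), D₁ t ≠ 0 := fun t ht => (hpos₁ t ht).ne'
  have h2ne : ∀ t ∈ Ici (0:ℝ), D₂ t ≠ 0 := fun t ht => (hpos₂ t ht).ne'
  have h1'ne : ∀ t ∈ Ici (0:ℝ), D₁' t ≠ 0 := fun t ht => (hneg₁ t ht).ne
  have h2'ne : ∀ t ∈ Ici (0:ℝ), D₂' t ≠ 0 := fun t ht => (hneg₂ t ht).ne
  set f₁ : ℝ → ℝ := fun t => Real.log (D₁ t) with hf₁def
  set f₂ : ℝ → ℝ := fun t => Real.log (D₂ t) with hf₂def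
  have hf₁d : ∀ t ∈ Ici (0:ℝ), HasDerivAt f₁ (D₁' t / D₁ t) t := fun t ht =>
    (hD₁ t).log (h1ne t ht)
  have hf₂d : ∀ t ∈ Ici (0:ℝ), HasDerivAt f₂ (D₂' t / D₂ t) t := fun t ht =>
    (hD₂ t).log (h2ne t ht)
  have hf₁'neg : ∀ t ∈ Ici (0:ℝ), D₁' t / D₁ t < 0 := fun t ht =>
    div_neg_of_neg_of_pos (hneg₁ t ht) (hpos₁ t ht)
  have hf₂'neg : ∀ t ∈ Ici (0:ℝ), D₂' t / D₂ t < 0 := fun t ht =>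
    div_neg_of_neg_of_pos (hneg₂ t ht) (hpos₂ t ht)
  have hD₂cont : Continuous D₂ := continuous_iff_continuousAt.mpr fun t => (hD₂ t).continuousAt
  have hD₂anti : StrictAntiOn D₂ (Ici 0) := by
    apply strictAntiOn_of_deriv_neg (convex_Ici 0) hD₂cont.continuousOn
    intro x hx
    rw [interior_Ici] at hx
    rw [(hD₂ x).deriv]
    exact hneg₂ x (Set.mem_Ici.mpr (le_of_lt (Set.mem_Ioi.mp hx)))
  have hf₂anti : StrictAntiOn f₂ (Ici 0) := fun s hs t ht hst =>
    Real.log_lt_log (hpos₂ t ht) (hD₂anti hs ht hst)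
  have hf₂mem : ∀ t ∈ Ici (0:ℝ), f₂ t ∈ Iic (0:ℝ) := fun t ht =>
    Real.log_nonpos (hpos₂ t ht).le (hle₂ t ht)
  have hg₂left' : ∀ t ∈ Ici (0:ℝ), g₂ (f₂ t) = t := hg₂left
  have hg₂right' : ∀ z ∈ Iic (0:ℝ), f₂ (g₂ z) = z := hg₂right
  have hg₂anti : ∀ z₁ ∈ Iic (0:ℝ), ∀ z₂ ∈ Iic (0:ℝ), z₁ < z₂ → g₂ z₂ < g₂ z₁ := by
    intro z₁ h₁ z₂ h₂ hlt
    rcases lt_or_ge (g₂ z₂) (g₂ z₁) with h | h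
    · exact h
    exfalso
    rcases eq_or_lt_of_le h with heq | hlt'
    · have : z₁ = z₂ := by rw [← hg₂right' z₁ h₁, ← hg₂right' z₂ h₂, heq]
      exact absurd this hlt.ne
    · have := hf₂anti (hg₂maps h₁) (hg₂maps h₂) hlt'
      rw [hg₂right' z₁ h₁, hg₂right' z₂ h₂] at this
      exact absurd (hlt.trans this) (lt_irrefl _)
  set φ : ℝ → ℝ := fun t => (D₁' t / D₁ t) / (D₂' t / D₂ t) with hφdef
  set E : ℝ → ℝ := fun t =>
      ((D₁'' t * D₁ t - D₁' t * D₁' t) / D₁ t ^ 2 * (D₂' t / D₂ t) -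
        D₁' t / D₁ t * ((D₂'' t * D₂ t - D₂' t * D₂' t) / D₂ t ^ 2)) / (D₂' t / D₂ t) ^ 2
    with hEdef
  have hφd : ∀ t ∈ Ici (0:ℝ), HasDerivAt φ (E t) t := fun t ht =>
    ((hD₁' t).div (hD₁ t) (h1ne t ht)).div ((hD₂' t).div (hD₂ t) (h2ne t ht))
      (div_ne_zero (h2'ne t ht) (h2ne t ht))
  have hφpos : ∀ t ∈ Ici (0:ℝ), 0 < φ t := fun t ht =>
    div_pos_of_neg_of_neg (hf₁'neg t ht) (hf₂'neg t ht)
  have hEiff : ∀ t ∈ Ici (0:ℝ),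
      (E t ≤ 0 ↔ -(D₂'' t) / D₂' t + D₂' t / D₂ t ≤ -(D₁'' t) / D₁' t + D₁' t / D₁ t) := by
    intro t ht
    have e1 := h1ne t ht
    have e2 := h2ne t ht
    have e3 := h1'ne t ht
    have e4 := h2'ne t ht
    have hE : E t = φ t * ((-(D₂'' t) / D₂' t + D₂' t / D₂ t) -
        (-(D₁'' t) / D₁' t + D₁' t / D₁ t)) := by
      simp only [hEdef, hφdef]
      field_simp
      ring
    rw [hE]
    have h0 := hφpos t ht
    constructor
    · intro h
      by_contra hc
      push_neg at hc
      nlinarith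
    · intro h
      nlinarith
  have hRlim : ∀ t ∈ Ici (0:ℝ), ∀ l : Filter ℝ, l ≤ 𝓝[≠] t →
      Filter.Tendsto (fun s => (f₁ s - f₁ t) / (f₂ s - f₂ t)) l (𝓝 (φ t)) :=
    fun t ht l hl => ratio_tendsto_aux (hf₁d t ht) (hf₂d t ht) (hf₂'neg t ht).ne hl
  constructor
  · -- convex ⇒ index inequality
    intro hconv t ht
    have hconv' : ConvexOn ℝ (Iic 0) (fun z => f₁ (g₂ z)) := hconv
    rw [← hEiff t ht]
    -- first: φ is antitone on [0,∞)
    have hanti : ∀ t₂ ∈ Ici (0:ℝ), ∀ t₁ ∈ Ici (0:ℝ), t₂ < t₁ → φ t₁ ≤ φ t₂ := by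
      intro t₂ ht₂ t₁ ht₁ hlt
      have hne12 : f₂ t₁ - f₂ t₂ ≠ 0 := sub_ne_zero.mpr (hf₂anti ht₂ ht₁ hlt).ne
      have hne21 : f₂ t₂ - f₂ t₁ ≠ 0 := sub_ne_zero.mpr (hf₂anti ht₂ ht₁ hlt).ne'
      have hIoo : ∀ s ∈ Ioo t₂ t₁, s ∈ Ici (0:ℝ) := fun s hs => le_trans ht₂ hs.1.le
      have hslope : ∀ s ∈ Ioo t₂ t₁,
          (f₁ s - f₁ t₁) / (f₂ s - f₂ t₁) ≤ (f₁ s - f₁ t₂) / (f₂ s - f₂ t₂) := by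
        intro s hs
        have hs0 : s ∈ Ici (0:ℝ) := hIoo s hs
        have hxy : f₂ t₁ < f₂ s := hf₂anti hs0 ht₁ hs.2
        have hyz : f₂ s < f₂ t₂ := hf₂anti ht₂ hs0 hs.1
        have key := hconv'.slope_mono_adjacent (hf₂mem t₁ ht₁) (hf₂mem t₂ ht₂) hxy hyz
        simp only [hg₂left' s hs0, hg₂left' t₁ ht₁, hg₂left' t₂ ht₂] at key
        have heq : (f₁ t₂ - f₁ s) / (f₂ t₂ - f₂ s) = (f₁ s - f₁ t₂) / (f₂ s - f₂ t₂) := by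
          rw [← neg_sub (f₁ s), ← neg_sub (f₂ s), neg_div_neg_eq]
        linarith [key, heq.ge]
      have hne1 : Filter.NeBot (𝓝[Ioo t₂ t₁] t₁) := right_nhdsWithin_Ioo_neBot hlt
      have hne2 : Filter.NeBot (𝓝[Ioo t₂ t₁] t₂) := left_nhdsWithin_Ioo_neBot hlt
      have hl₁ : 𝓝[Ioo t₂ t₁] t₁ ≤ 𝓝[≠] t₁ :=
        nhdsWithin_mono _ (fun x hx => ne_of_lt hx.2)
      have hl₂ : 𝓝[Ioo t₂ t₁] t₂ ≤ 𝓝[≠] t₂ :=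
        nhdsWithin_mono _ (fun x hx => ne_of_gt hx.1)
      have hA := hRlim t₁ ht₁ _ hl₁
      have hA' := hRlim t₂ ht₂ _ hl₂
      have hf₁c : Filter.Tendsto f₁ (𝓝[Ioo t₂ t₁] t₁) (𝓝 (f₁ t₁)) :=
        ((hf₁d t₁ ht₁).continuousAt.tendsto).mono_left nhdsWithin_le_nhds
      have hf₂c : Filter.Tendsto f₂ (𝓝[Ioo t₂ t₁] t₁) (𝓝 (f₂ t₁)) :=
        ((hf₂d t₁ ht₁).continuousAt.tendsto).mono_left nhdsWithin_le_nhds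
      have hf₁c' : Filter.Tendsto f₁ (𝓝[Ioo t₂ t₁] t₂) (𝓝 (f₁ t₂)) :=
        ((hf₁d t₂ ht₂).continuousAt.tendsto).mono_left nhdsWithin_le_nhds
      have hf₂c' : Filter.Tendsto f₂ (𝓝[Ioo t₂ t₁] t₂) (𝓝 (f₂ t₂)) :=
        ((hf₂d t₂ ht₂).continuousAt.tendsto).mono_left nhdsWithin_le_nhds
      have hB : Filter.Tendsto (fun s => (f₁ s - f₁ t₂) / (f₂ s - f₂ t₂)) (𝓝[Ioo t₂ t₁] t₁)
          (𝓝 ((f₁ t₁ - f₁ t₂) / (f₂ t₁ - f₂ t₂))) :=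
        (hf₁c.sub tendsto_const_nhds).div (hf₂c.sub tendsto_const_nhds) hne12
      have hB' : Filter.Tendsto (fun s => (f₁ s - f₁ t₁) / (f₂ s - f₂ t₁)) (𝓝[Ioo t₂ t₁] t₂)
          (𝓝 ((f₁ t₂ - f₁ t₁) / (f₂ t₂ - f₂ t₁))) :=
        (hf₁c'.sub tendsto_const_nhds).div (hf₂c'.sub tendsto_const_nhds) hne21
      have h1 : φ t₁ ≤ (f₁ t₁ - f₁ t₂) / (f₂ t₁ - f₂ t₂) :=
        le_of_tendsto_of_tendsto hA hB
          (by filter_upwards [self_mem_nhdsWithin] with s hs using hslope s hs)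
      have h2 : (f₁ t₂ - f₁ t₁) / (f₂ t₂ - f₂ t₁) ≤ φ t₂ :=
        le_of_tendsto_of_tendsto hB' hA'
          (by filter_upwards [self_mem_nhdsWithin] with s hs using hslope s hs)
      have heq : (f₁ t₂ - f₁ t₁) / (f₂ t₂ - f₂ t₁) = (f₁ t₁ - f₁ t₂) / (f₂ t₁ - f₂ t₂) := by
        rw [← neg_sub (f₁ t₁), ← neg_sub (f₂ t₁), neg_div_neg_eq]
      linarith [heq.le, heq.ge]
    -- then: the derivative of φ at t is ≤ 0
    have hslope0 : Filter.Tendsto (slope φ t) (𝓝[>] t) (𝓝 (E t)) :=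
      (hasDerivAt_iff_tendsto_slope.mp (hφd t ht)).mono_left
        (nhdsWithin_mono _ fun x hx => ne_of_gt hx)
    refine le_of_tendsto hslope0 ?_
    filter_upwards [self_mem_nhdsWithin] with s hs
    have hs0 : s ∈ Ici (0:ℝ) := Set.mem_Ici.mpr (le_trans (Set.mem_Ici.mp ht) (le_of_lt (Set.mem_Ioi.mp hs)))
    rw [slope_def_field]
    exact div_nonpos_iff.mpr (Or.inr ⟨sub_nonpos.mpr (hanti t ht s hs0 hs),
      sub_nonneg.mpr (le_of_lt hs)⟩)
  · -- index inequality ⇒ convex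
    intro hidx
    have hEneg : ∀ t ∈ Ici (0:ℝ), E t ≤ 0 := fun t ht => (hEiff t ht).mpr (hidx t ht)
    have hφanti : AntitoneOn φ (Ici 0) := by
      apply antitoneOn_of_deriv_nonpos (convex_Ici 0)
      · exact fun t ht => (hφd t ht).continuousAt.continuousWithinAt
      · intro t ht
        rw [interior_Ici] at ht
        exact (hφd t (Set.mem_Ici.mpr (le_of_lt (Set.mem_Ioi.mp ht)))).differentiableAt.differentiableWithinAt
      · intro t ht
        rw [interior_Ici] at ht
        rw [(hφd t (Set.mem_Ici.mpr (le_of_lt (Set.mem_Ioi.mp ht)))).deriv]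
        exact hEneg t (Set.mem_Ici.mpr (le_of_lt (Set.mem_Ioi.mp ht)))
    show ConvexOn ℝ (Iic 0) (fun z => f₁ (g₂ z))
    apply convexOn_of_slope_mono_adjacent (convex_Iic 0)
    intro x y z hx hz hxy hyz
    have hy : y ∈ Iic (0:ℝ) := le_trans hyz.le hz
    have ht₁ : g₂ x ∈ Ici (0:ℝ) := hg₂maps hx
    have ht : g₂ y ∈ Ici (0:ℝ) := hg₂maps hy
    have ht₃ : g₂ z ∈ Ici (0:ℝ) := hg₂maps hz
    have h21 : g₂ y < g₂ x := hg₂anti x hx y hy hxy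
    have h32 : g₂ z < g₂ y := hg₂anti y hy z hz hyz
    have hIcc1 : ∀ u ∈ Icc (g₂ y) (g₂ x), u ∈ Ici (0:ℝ) := fun u hu => le_trans ht hu.1
    have hIcc2 : ∀ u ∈ Icc (g₂ z) (g₂ y), u ∈ Ici (0:ℝ) := fun u hu => le_trans ht₃ hu.1
    obtain ⟨ξ, hξmem, hξ⟩ := cauchy_ratio_aux h21
      (fun u hu => hf₁d u (hIcc1 u hu)) (fun u hu => hf₂d u (hIcc1 u hu))
      (by rw [hg₂right' x hx, hg₂right' y hy]; exact sub_ne_zero.mpr hxy.ne)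
      (fun u hu => (hf₂'neg u (hIcc1 u (Ioo_subset_Icc_self hu))).ne)
    obtain ⟨η, hηmem, hη⟩ := cauchy_ratio_aux h32
      (fun u hu => hf₁d u (hIcc2 u hu)) (fun u hu => hf₂d u (hIcc2 u hu))
      (by rw [hg₂right' y hy, hg₂right' z hz]; exact sub_ne_zero.mpr hyz.ne)
      (fun u hu => (hf₂'neg u (hIcc2 u (Ioo_subset_Icc_self hu))).ne)
    rw [hg₂right' x hx, hg₂right' y hy] at hξ
    rw [hg₂right' y hy, hg₂right' z hz] at hη
    have hξφ : (f₁ (g₂ x) - f₁ (g₂ y)) / (x - y) = φ ξ := hξ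
    have hηφ : (f₁ (g₂ y) - f₁ (g₂ z)) / (y - z) = φ η := hη
    have hξ0 : ξ ∈ Ici (0:ℝ) := le_trans ht hξmem.1.le
    have hη0 : η ∈ Ici (0:ℝ) := le_trans ht₃ hηmem.1.le
    have hφle : φ ξ ≤ φ η := hφanti hη0 hξ0 (le_of_lt (hηmem.2.trans hξmem.1))
    have e1 : (f₁ (g₂ y) - f₁ (g₂ x)) / (y - x) = (f₁ (g₂ x) - f₁ (g₂ y)) / (x - y) := by
      rw [← neg_sub (f₁ (g₂ x)), ← neg_sub x, neg_div_neg_eq]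
    have e2 : (f₁ (g₂ z) - f₁ (g₂ y)) / (z - y) = (f₁ (g₂ y) - f₁ (g₂ z)) / (y - z) := by
      rw [← neg_sub (f₁ (g₂ y)), ← neg_sub y, neg_div_neg_eq]
    show (f₁ (g₂ y) - f₁ (g₂ x)) / (y - x) ≤ (f₁ (g₂ z) - f₁ (g₂ y)) / (z - y)
    rw [e1, e2, hξφ, hηφ]
    exact hφle
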